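/- Let l be a field, let k be a subfield of l, and let A be a commutative l-algebra of finite type. Then there exist an intermediate field m with k ⊆ m ⊆ l which is finitely generated as a field extension of k, and a finite type m-algebra B, together with an isomorphism of l-algebras A ≅ l ⊗_m B. -/

import Mathlib

open TensorProduct

set_option synthInstance.maxHeartbeats 1000000
set_option maxHeartbeats 2000000

private theorem exists_mvPolynomial_lift' {k l : Type} [Field k] [Field l] [Algebra k l] {σ : Type}
    (m : IntermediateField k l) (p : MvPolynomial σ l) (h : ∀ d, p.coeff d ∈ m) :
    ∃ q : MvPolynomial σ m, MvPolynomial.map (algebraMap m l) q = p := by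
  refine ⟨∑ d ∈ p.support, MvPolynomial.monomial d ⟨p.coeff d, h d⟩, ?_⟩
  rw [map_sum]
  simp only [MvPolynomial.map_monomial]
  simpa using p.support_sum_monomial_coeff

private theorem descend_aux {F l A : Type} [Field F] [Field l] [Algebra F l]
    [CommRing A] [Algebra l A] {n : ℕ} {ι : Type} (L : ι → MvPolynomial (Fin n) F)
    (φ : MvPolynomial (Fin n) l →ₐ[l] A) (hφ : Function.Surjective φ)
    (hker : RingHom.ker φ =
      Ideal.span (Set.range fun i => MvPolynomial.map (algebraMap F l) (L i))) :
    Nonempty (A ≃ₐ[l] l ⊗[F] (MvPolynomial (Fin n) F ⧸ Ideal.span (Set.range L))) := by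
  set I₀ : Ideal (MvPolynomial (Fin n) F) := Ideal.span (Set.range L) with hI₀
  set g : l ⊗[F] MvPolynomial (Fin n) F →ₐ[l] l ⊗[F] (MvPolynomial (Fin n) F ⧸ I₀) :=
    Algebra.TensorProduct.map (AlgHom.id l l) (Ideal.Quotient.mkₐ F I₀) with hg
  have hgsurj : Function.Surjective g :=
    Algebra.FiniteType.baseChangeAux_surj l (Ideal.Quotient.mkₐ_surjective F I₀)
  have hgker : RingHom.ker g = Ideal.map (Algebra.TensorProduct.includeRight
      (R := F) (A := l) (B := MvPolynomial (Fin n) F)) I₀ := by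
    have h1 := Algebra.TensorProduct.lTensor_ker (A := l) (Ideal.Quotient.mkₐ F I₀)
      (Ideal.Quotient.mkₐ_surjective F I₀)
    have h0 : RingHom.ker g =
        RingHom.ker (Algebra.TensorProduct.map (AlgHom.id F l) (Ideal.Quotient.mkₐ F I₀)) := rfl
    rw [h0, h1]
    congr 1
    exact Ideal.mk_ker
  set e := MvPolynomial.algebraTensorAlgEquiv (R := F) (σ := Fin n) (A := l) with he
  set ψ : MvPolynomial (Fin n) l →ₐ[l] l ⊗[F] (MvPolynomial (Fin n) F ⧸ I₀) :=
    g.comp e.symm.toAlgHom with hψ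
  have hψsurj : Function.Surjective ψ := hgsurj.comp e.symm.surjective
  have hψker : RingHom.ker ψ = RingHom.ker φ := by
    have h2 : RingHom.ker ψ = Ideal.comap e.toRingEquiv.symm (RingHom.ker g) := rfl
    rw [h2, hgker, Ideal.comap_symm, hI₀, Ideal.map_span, Ideal.map_span, Set.image_image,
      ← Set.range_comp, hker]
    refine congrArg Ideal.span (congrArg Set.range ?_)
    funext i
    show e.toRingEquiv (1 ⊗ₜ[F] L i) = _
    show e (1 ⊗ₜ[F] L i) = _
    rw [he, MvPolynomial.algebraTensorAlgEquiv_tmul, one_smul]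
  exact ⟨((Ideal.quotientKerAlgEquivOfSurjective hφ).symm.trans
    (Ideal.quotientEquivAlgOfEq l hψker.symm)).trans
    (Ideal.quotientKerAlgEquivOfSurjective hψsurj)⟩

/-- **Descent to a finitely generated subextension** (first step in the proof of
Theorem 1.2).  Let `k ⊆ l` be fields and `A` a commutative `l`-algebra of finite type.
Then there is an intermediate field `k ⊆ m ⊆ l`, finitely generated as a field
extension of `k`, and a finite type `m`-algebra `B` such that `A ≅ l ⊗_m B` as
`l`-algebras. -/
theorem descend_finiteType_algebra_to_finitely_generated_subextension
    {k l : Type} [Field k] [Field l] [Algebra k l]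
    (A : Type) [CommRing A] [Algebra l A] [Algebra.FiniteType l A] :
    ∃ m : IntermediateField k l, m.FG ∧
      ∃ (B : Type) (cB : CommRing B),
        letI : CommRing B := cB
        ∃ aB : Algebra m B,
          letI : Algebra m B := aB
          Algebra.FiniteType m B ∧ Nonempty (A ≃ₐ[l] (l ⊗[m] B)) := by
  classical
  obtain ⟨n, φ, hφ⟩ := (Algebra.FiniteType.iff_quotient_mvPolynomial'').mp ‹_›
  obtain ⟨s, hs⟩ : (RingHom.ker φ).FG := IsNoetherian.noetherian (RingHom.ker φ)
  set T : Finset l := s.biUnion (fun p => p.coeffs) with hT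
  refine ⟨IntermediateField.adjoin k (↑T : Set l), IntermediateField.fg_adjoin_finset T, ?_⟩
  set m : IntermediateField k l := IntermediateField.adjoin k (↑T : Set l) with hm
  have hcoeff : ∀ p : MvPolynomial (Fin n) l, p ∈ s → ∀ d, p.coeff d ∈ m := by
    intro p hp d
    by_cases h0 : p.coeff d = 0
    · exact h0 ▸ m.zero_mem
    · apply IntermediateField.subset_adjoin
      exact Finset.mem_coe.mpr (Finset.mem_biUnion.mpr ⟨p, hp, p.coeff_mem_coeffs d h0⟩)
  have hlift : ∀ p : (↑s : Set (MvPolynomial (Fin n) l)),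
      ∃ q : MvPolynomial (Fin n) m,
        MvPolynomial.map (algebraMap m l) q = (p : MvPolynomial (Fin n) l) :=
    fun p => exists_mvPolynomial_lift' m (p : MvPolynomial (Fin n) l) (hcoeff p p.2)
  choose L hL using hlift
  refine ⟨MvPolynomial (Fin n) m ⧸ Ideal.span (Set.range L), inferInstance, inferInstance, ?_, ?_⟩
  · exact Algebra.FiniteType.of_surjective
      (Ideal.Quotient.mkₐ m (Ideal.span (Set.range L)))
      (Ideal.Quotient.mkₐ_surjective m (Ideal.span (Set.range L)))
  · refine descend_aux L φ hφ ?_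
    have hrange : (Set.range fun p : (↑s : Set (MvPolynomial (Fin n) l)) =>
        MvPolynomial.map (algebraMap m l) (L p)) = (↑s : Set (MvPolynomial (Fin n) l)) := by
      rw [show (fun p : (↑s : Set (MvPolynomial (Fin n) l)) =>
        MvPolynomial.map (algebraMap m l) (L p)) =
        (fun p : (↑s : Set (MvPolynomial (Fin n) l)) => (p : MvPolynomial (Fin n) l)) from
        funext hL]
      exact Subtype.range_coe
    rw [hrange, hs]
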